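/- For λ ∈ (0,1) and s ∈ ℂ with 0 < Re(s) < 1/λ − 1, the degenerate gamma function satisfies the difference equation Γ_λ(s+1) = (s/(1 − λ(s+1))) · Γ_λ(s). -/

import Mathlib

open MeasureTheory Complex

/-- The degenerate gamma function, defined as an integral. -/
noncomputable def degGamma (l : ℝ) (s : ℂ) : ℂ :=
  ∫ t in Set.Ioi (0 : ℝ), ((1 + l * t : ℝ) : ℂ) ^ (-(1 / l) : ℂ) * (t : ℂ) ^ (s - 1)

private lemma degGamma_key_int (l : ℝ) (hl : 0 < l) (c : ℝ) (hc : c ≤ 0) (a : ℂ)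
    (ha : 0 < a.re) (hac : a.re < -c) :
    IntegrableOn (fun t : ℝ => ((1 + l * t : ℝ) : ℂ) ^ (c : ℂ) * (t : ℂ) ^ (a - 1))
      (Set.Ioi 0) := by
  have hloc : LocallyIntegrableOn (fun t : ℝ => ((1 + l * t : ℝ) : ℂ) ^ (c : ℂ))
      (Set.Ioi 0) := by
    apply ContinuousOn.locallyIntegrableOn _ measurableSet_Ioi
    apply ContinuousOn.cpow_const
    · exact Continuous.continuousOn (by continuity)
    · intro t ht
      rw [Complex.ofReal_mem_slitPlane]
      have := ht.out
      positivity
  have htop : (fun t : ℝ => ((1 + l * t : ℝ) : ℂ) ^ (c : ℂ)) =O[Filter.atTop]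
      fun t : ℝ => t ^ (-(-c)) := by
    rw [neg_neg]
    apply Asymptotics.IsBigO.of_bound (l ^ c)
    filter_upwards [Filter.eventually_gt_atTop (0 : ℝ)] with t ht
    have h1 : (0 : ℝ) < 1 + l * t := by positivity
    rw [Complex.norm_cpow_eq_rpow_re_of_pos h1, Complex.ofReal_re,
      Real.norm_eq_abs, abs_of_pos (Real.rpow_pos_of_pos ht _)]
    calc (1 + l * t) ^ c ≤ (l * t) ^ c := by
          exact Real.rpow_le_rpow_of_nonpos (by positivity) (by linarith) hc
      _ = l ^ c * t ^ c := Real.mul_rpow hl.le ht.le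
  have hbot : (fun t : ℝ => ((1 + l * t : ℝ) : ℂ) ^ (c : ℂ)) =O[nhdsWithin 0 (Set.Ioi 0)]
      fun t : ℝ => t ^ (-(0 : ℝ)) := by
    apply Asymptotics.IsBigO.of_bound 1
    filter_upwards [self_mem_nhdsWithin] with t ht
    have ht' : (0 : ℝ) < t := ht
    have h1 : (0 : ℝ) < 1 + l * t := by positivity
    rw [Complex.norm_cpow_eq_rpow_re_of_pos h1, Complex.ofReal_re,
      neg_zero, Real.rpow_zero, Real.norm_eq_abs, abs_one, mul_one]
    exact Real.rpow_le_one_of_one_le_of_nonpos (by nlinarith) hc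
  have := mellinConvergent_of_isBigO_rpow (E := ℂ) hloc htop hac hbot ha
  refine this.congr_fun (fun t ht => ?_) measurableSet_Ioi
  simp [smul_eq_mul, mul_comm]

theorem degGamma_difference_equation (l : ℝ) (hl : l ∈ Set.Ioo (0 : ℝ) 1)
    (s : ℂ) (hs : 0 < s.re) (hs' : s.re < 1 / l - 1) :
    degGamma l (s + 1) = s / (1 - l * (s + 1)) * degGamma l s := by
  obtain ⟨hl0, hl1⟩ := hl
  have hlc : (l : ℂ) ≠ 0 := Complex.ofReal_ne_zero.mpr hl0.ne'
  have hinv : 1 < 1 / l := by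
    rw [lt_div_iff₀ hl0]; linarith
  have hA : s.re + 1 < l⁻¹ := by rw [← one_div]; linarith
  have hB : s.re < l⁻¹ - 1 := by rw [← one_div]; linarith
  have hC : (1:ℝ) < l⁻¹ := by rw [← one_div]; linarith
  set c0 : ℂ := -(1 / (l : ℂ)) with hc0
  set c1 : ℂ := 1 + c0 with hc1
  -- c0 and c1 as complex numbers are casts of real numbers
  have hc0cast : c0 = ((-(1/l) : ℝ) : ℂ) := by push_cast [hc0]; ring
  have hc1cast : c1 = ((1 - 1/l : ℝ) : ℂ) := by push_cast [hc1, hc0]; ring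
  -- integrability of the three relevant integrands
  have int1 : IntegrableOn (fun t : ℝ => ((1 + l * t : ℝ) : ℂ) ^ c0 * (t : ℂ) ^ (s - 1))
      (Set.Ioi 0) := by
    rw [hc0cast]
    exact degGamma_key_int l hl0 _ (by simp [le_of_lt, hl0, one_div_pos.mpr hl0]) s hs
      (by rw [neg_neg]; simp; linarith [hA, hB, hC])
  have int2 : IntegrableOn (fun t : ℝ => ((1 + l * t : ℝ) : ℂ) ^ c0 * (t : ℂ) ^ (s + 1 - 1))
      (Set.Ioi 0) := by
    rw [hc0cast]
    exact degGamma_key_int l hl0 _ (by simp [le_of_lt, hl0, one_div_pos.mpr hl0]) (s + 1)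
      (by simp; linarith [hA, hB, hC]) (by simp; linarith [hA, hB, hC])
  have int3 : IntegrableOn (fun t : ℝ => ((1 + l * t : ℝ) : ℂ) ^ c1 * (t : ℂ) ^ (s - 1))
      (Set.Ioi 0) := by
    rw [hc1cast]
    exact degGamma_key_int l hl0 _ (by simp; linarith [hA, hB, hC]) s hs (by simp; linarith [hA, hB, hC])
  -- The FTC function and its derivative
  set F : ℝ → ℂ := fun t => (t : ℂ) ^ s * ((1 + l * t : ℝ) : ℂ) ^ c1 with hF
  set F' : ℝ → ℂ := fun t =>
    s * (t : ℂ) ^ (s - 1) * ((1 + l * t : ℝ) : ℂ) ^ c1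
      + (t : ℂ) ^ s * (c1 * ((1 + l * t : ℝ) : ℂ) ^ c0 * l) with hF'
  have hbase : ∀ t : ℝ, HasDerivAt (fun t : ℝ => ((1 + l * t : ℝ) : ℂ)) (l : ℂ) t := by
    intro t
    have h1 : HasDerivAt (fun t : ℝ => ((t : ℝ) : ℂ)) 1 t := Complex.ofRealCLM.hasDerivAt
    have := (h1.const_mul (l : ℂ)).const_add 1
    simp only [mul_one] at this
    convert this using 2 with x
    · rfl
    push_cast; ring
  have hslit : ∀ t : ℝ, 0 ≤ t → ((1 + l * t : ℝ) : ℂ) ∈ Complex.slitPlane := by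
    intro t ht
    rw [Complex.ofReal_mem_slitPlane]
    positivity
  have hderiv : ∀ t ∈ Set.Ioi (0 : ℝ), HasDerivAt F (F' t) t := by
    intro t ht
    have ht' : (0 : ℝ) < t := ht
    have h1 : HasDerivAt (fun t : ℝ => (t : ℂ) ^ s) (s * (t : ℂ) ^ (s - 1)) t := by
      have := (Complex.hasStrictDerivAt_cpow_const (c := s)
        (by rw [Complex.ofReal_mem_slitPlane]; exact ht')).hasDerivAt.comp_ofReal
      exact this
    have h2 : HasDerivAt (fun t : ℝ => ((1 + l * t : ℝ) : ℂ) ^ c1)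
        (c1 * ((1 + l * t : ℝ) : ℂ) ^ (c1 - 1) * l) t :=
      by have := (Complex.hasStrictDerivAt_cpow_const (c := c1) (hslit t ht'.le)).hasDerivAt.comp t (hbase t); exact this
    have h3 := h1.mul h2
    rw [hF']
    convert h3 using 2
    · rfl
    · rfl
    rw [hc1]; ring_nf
  have hcont : ContinuousWithinAt F (Set.Ici 0) 0 := by
    apply ContinuousWithinAt.mul
    · -- t ↦ (t:ℂ)^s at 0 within Ici 0
      rw [ContinuousWithinAt]
      have h0 : ((0 : ℝ) : ℂ) ^ s = 0 := by
        rw [Complex.ofReal_zero, Complex.zero_cpow (fun h => by simp [h] at hs)]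
      rw [h0, tendsto_zero_iff_norm_tendsto_zero]
      have hrpow : Filter.Tendsto (fun t : ℝ => t ^ s.re) (nhdsWithin 0 (Set.Ici 0)) (nhds 0) := by
        have : ContinuousAt (fun t : ℝ => t ^ s.re) 0 :=
          Real.continuousAt_rpow_const 0 s.re (Or.inr hs.le)
        have := this.continuousWithinAt (s := Set.Ici 0)
        rwa [ContinuousWithinAt, Real.zero_rpow hs.ne'] at this
      refine hrpow.congr' ?_
      filter_upwards [self_mem_nhdsWithin] with t ht
      rw [Complex.norm_cpow_eq_rpow_re_of_nonneg ht hs.ne']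
    · have hb : ContinuousAt (fun t : ℝ => ((1 + l * t : ℝ) : ℂ)) 0 :=
        Continuous.continuousAt (by continuity)
      exact (hb.cpow continuousAt_const (hslit 0 le_rfl)).continuousWithinAt
  have hF0 : F 0 = 0 := by
    rw [hF]
    simp only []
    rw [Complex.ofReal_zero, Complex.zero_cpow (fun h => by simp [h] at hs), zero_mul]
  have htends : Filter.Tendsto F Filter.atTop (nhds 0) := by
    rw [tendsto_zero_iff_norm_tendsto_zero]
    have hc1re : c1.re = 1 - 1/l := by rw [hc1cast]; simp
    have key : Filter.Tendsto (fun t : ℝ => l ^ (1 - 1/l) * t ^ (-(1/l - 1 - s.re)))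
        Filter.atTop (nhds 0) := by
      have := (tendsto_rpow_neg_atTop (y := 1/l - 1 - s.re) (by linarith)).const_mul
        (l ^ (1 - 1/l))
      simpa using this
    apply squeeze_zero' (g := fun t : ℝ => l ^ (1 - 1/l) * t ^ (-(1/l - 1 - s.re)))
    · filter_upwards with t; exact norm_nonneg _
    · filter_upwards [Filter.eventually_gt_atTop (0 : ℝ)] with t ht
      have h1 : (0 : ℝ) < 1 + l * t := by positivity
      rw [hF]
      simp only [norm_mul,
        Complex.norm_cpow_eq_rpow_re_of_pos ht, Complex.norm_cpow_eq_rpow_re_of_pos h1, hc1re]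
      calc t ^ s.re * (1 + l * t) ^ (1 - 1/l)
          ≤ t ^ s.re * (l * t) ^ (1 - 1/l) := by
            apply mul_le_mul_of_nonneg_left _ (Real.rpow_nonneg ht.le _)
            exact Real.rpow_le_rpow_of_nonpos (by positivity) (by linarith) (by linarith)
        _ = l ^ (1 - 1/l) * t ^ (-(1/l - 1 - s.re)) := by
            rw [Real.mul_rpow hl0.le ht.le,
              show t ^ s.re * (l ^ (1 - 1/l) * t ^ (1 - 1/l))
                = l ^ (1 - 1/l) * (t ^ s.re * t ^ (1 - 1/l)) by ring,
              ← Real.rpow_add ht]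
            congr 1
            congr 1
            ring
    · exact key
  -- integrability of F'
  have hF'int : IntegrableOn F' (Set.Ioi 0) := by
    have heq : F' = fun t =>
        s * (((1 + l * t : ℝ) : ℂ) ^ c1 * (t : ℂ) ^ (s - 1))
          + (c1 * l) * (((1 + l * t : ℝ) : ℂ) ^ c0 * (t : ℂ) ^ (s + 1 - 1)) := by
      funext t
      rw [hF']
      have : (t : ℂ) ^ (s + 1 - 1) = (t : ℂ) ^ s := by norm_num
      rw [this]; ring
    rw [heq]
    exact (int3.const_mul s).add (int2.const_mul (c1 * l))
  -- FTC
  have hFTC := integral_Ioi_of_hasDerivAt_of_tendsto hcont hderiv hF'int htends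
  rw [hF0, sub_zero] at hFTC
  -- split the integral of F'
  have hsplit : ∫ t in Set.Ioi (0 : ℝ), F' t
      = s * (∫ t in Set.Ioi (0 : ℝ), ((1 + l * t : ℝ) : ℂ) ^ c1 * (t : ℂ) ^ (s - 1))
        + (c1 * l) * (∫ t in Set.Ioi (0 : ℝ), ((1 + l * t : ℝ) : ℂ) ^ c0 * (t : ℂ) ^ (s + 1 - 1)) := by
    rw [← integral_const_mul, ← integral_const_mul, ← integral_add (int3.const_mul s)
      (int2.const_mul (c1 * l))]
    apply setIntegral_congr_fun measurableSet_Ioi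
    intro t ht
    rw [hF']
    simp only [add_sub_cancel_right]
    ring
  -- expand (1+lt)^c1 = (1+lt)^c0 * (1+lt)
  have hone : ∫ t in Set.Ioi (0 : ℝ), ((1 + l * t : ℝ) : ℂ) ^ c1 * (t : ℂ) ^ (s - 1)
      = degGamma l s + l * degGamma l (s + 1) := by
    rw [degGamma, degGamma, ← integral_const_mul, ← integral_add int1 (int2.const_mul l)]
    apply setIntegral_congr_fun measurableSet_Ioi
    intro t ht
    have ht' : (0 : ℝ) < t := ht
    have h1 : (0 : ℝ) < 1 + l * t := by positivity
    have hne : ((1 + l * t : ℝ) : ℂ) ≠ 0 := Complex.ofReal_ne_zero.mpr h1.ne'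
    have hts2 : (t : ℂ) ^ s = (t : ℂ) ^ (s - 1) * t := by
      rw [Complex.cpow_sub _ _ (Complex.ofReal_ne_zero.mpr ht'.ne'), Complex.cpow_one,
        div_mul_cancel₀]
      exact Complex.ofReal_ne_zero.mpr ht'.ne'
    simp only [add_sub_cancel_right]
    rw [hc1, Complex.cpow_add _ _ hne, Complex.cpow_one, hts2]
    push_cast
    ring
  rw [hsplit, hone] at hFTC
  -- now pure algebra
  have hGint : (∫ t in Set.Ioi (0 : ℝ), ((1 + l * t : ℝ) : ℂ) ^ c0 * (t : ℂ) ^ (s + 1 - 1))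
      = degGamma l (s + 1) := by
    rw [hc0, degGamma]
  rw [hGint] at hFTC
  set G := degGamma l s
  set H := degGamma l (s + 1)
  have hden : (1 - (l : ℂ) * (s + 1)) ≠ 0 := by
    intro h
    have h2 : (1 - (l : ℂ) * (s + 1)).re = 0 := by rw [h]; rfl
    have h3 : (1 - (l : ℂ) * (s + 1)).re = 1 - l * (s.re + 1) := by
      simp [Complex.mul_re]
    rw [h3] at h2
    have h4 : l * (s.re + 1) < 1 := by
      have := mul_lt_mul_of_pos_left hA hl0
      rwa [mul_inv_cancel₀ hl0.ne'] at this
    linarith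
  have hc1l : c1 * l = (l : ℂ) - 1 := by
    rw [hc1, hc0]
    field_simp
    ring
  rw [hc1l] at hFTC
  rw [div_mul_eq_mul_div, eq_div_iff hden]
  linear_combination -hFTC
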